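/- Under Assumption A1, the conditioning mapping Γ : 𝒱×𝒜×C_m → 2^{C_μ×C_m} has a closed graph: if (μ̃^n,m̃^n) → (μ̃,m̃) in 𝒱, α^n → α in 𝒜, m^n → m in C_m, and (μ′^n,m′^n) ∈ Γ((μ̃^n,m̃^n),α^n,m^n) converges to (μ′,m′) in C_μ×C_m, then (μ′,m′) ∈ Γ((μ̃,m̃),α,m). -/

import Mathlib

open MeasureTheory Filter Topology
open scoped NNReal ENNReal

/-- Borel subprobability measures on `E` with the topology of weak convergence. -/
abbrev SubProb (E : Type*) [MeasurableSpace E] : Type _ :=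
  {μ : FiniteMeasure E // μ Set.univ ≤ 1}

section Framework

variable {S W A : Type*}
variable [MetricSpace S] [CompactSpace S] [Nonempty S]
  [MeasurableSpace S] [BorelSpace S] [SecondCountableTopology S]
variable [Fintype W] [Nonempty W] [TopologicalSpace W] [DiscreteTopology W]
  [MeasurableSpace W] [BorelSpace W]
variable [MetricSpace A] [CompactSpace A] [Nonempty A] [MeasurableSpace A] [BorelSpace A]
variable {T : ℕ}

variable (P0 : Fin T → W → A → SubProb S → ProbabilityMeasure W)
variable (P1 : Fin T → S → W → SubProb S → ProbabilityMeasure S)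

/-- `π⁰_{t+1}(u,{u'};α,m) = ∫_A P⁰_{t+1}(u,a,m,{u'}) α(da)`. -/
noncomputable def pi0 (t : Fin T) (u : W) (α : ProbabilityMeasure A) (m : SubProb S)
    (u' : W) : ℝ :=
  ∫ a, ((P0 t u a m : Measure W) {u'}).toReal ∂(α : Measure A)

/-- The one-step generator `L(φ)`. -/
noncomputable def Lgen (φ : ℕ → S → W → ℝ) (t : Fin T) (x : S) (u : W)
    (α : ProbabilityMeasure A) (m : SubProb S) : ℝ :=
  (∑ u' : W, pi0 P0 t u α m u' * ∫ x', φ ((t : ℕ) + 1) x' u' ∂(P1 t x u m : Measure S))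
    - φ (t : ℕ) x u

/-- The linear-programming constraint set `R[m;α]`. -/
def constraintSet (m0 : ProbabilityMeasure (S × W))
    (m : Fin T → W → SubProb S) (α : Fin T → W → ProbabilityMeasure A) :
    Set ((Fin (T + 1) → SubProb (S × W)) × (Fin T → SubProb (S × W))) :=
  {p | ∀ φ : ℕ → S → W → ℝ,
    (∀ t : ℕ, Continuous fun q : S × W => φ t q.1 q.2) →
    (∀ t : ℕ, ∃ C : ℝ, ∀ x u, |φ t x u| ≤ C) →
    (∑ t : Fin (T + 1), ∫ q : S × W, φ (t : ℕ) q.1 q.2 ∂((p.1 t).1 : Measure (S × W)))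
      = (∫ q : S × W, φ 0 q.1 q.2 ∂(m0 : Measure (S × W)))
        + ∑ t : Fin T, ∫ q : S × W,
            Lgen P0 P1 φ t q.1 q.2 (α t q.2) (m t q.2) ∂((p.2 t).1 : Measure (S × W))}

/-- The reward functional `J¹` of the minor player's linear programming problem. -/
noncomputable def J1 (f : Fin T → S → W → SubProb S → ℝ)
    (g : Fin (T + 1) → S → W → SubProb S → ℝ)
    (μ : Fin (T + 1) → W → SubProb S) (m : Fin T → W → SubProb S)
    (p : (Fin (T + 1) → SubProb (S × W)) × (Fin T → SubProb (S × W))) : ℝ :=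
  (∑ t : Fin T, ∫ q : S × W, f t q.1 q.2 (m t q.2) ∂((p.2 t).1 : Measure (S × W))) +
    ∑ t : Fin (T + 1), ∫ q : S × W, g t q.1 q.2 (μ t q.2) ∂((p.1 t).1 : Measure (S × W))

/-- `Θ̂(μ,m,α)`: the set of maximizers of `J¹(·;μ,m)` over `R[m;α]`. -/
def ThetaHat (f : Fin T → S → W → SubProb S → ℝ)
    (g : Fin (T + 1) → S → W → SubProb S → ℝ)
    (m0 : ProbabilityMeasure (S × W))
    (μ : Fin (T + 1) → W → SubProb S) (m : Fin T → W → SubProb S)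
    (α : Fin T → W → ProbabilityMeasure A) :
    Set ((Fin (T + 1) → SubProb (S × W)) × (Fin T → SubProb (S × W))) :=
  {p | p ∈ constraintSet P0 P1 m0 m α ∧
    ∀ q ∈ constraintSet P0 P1 m0 m α, J1 f g μ m q ≤ J1 f g μ m p}

/-- The marginal law `p_t(·;α,m)` of the major player's trajectory process, defined
recursively from the `W`-marginal of the initial law `m₀*`. -/
noncomputable def majLaw (m0 : ProbabilityMeasure (S × W))
    (α : Fin T → W → ProbabilityMeasure A) (m : Fin T → W → SubProb S) :
    ℕ → W → ℝ
  | 0, u => ((m0 : Measure (S × W)) (Set.univ ×ˢ ({u} : Set W))).toReal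
  | (t + 1), u =>
      if h : t < T then
        ∑ u' : W, majLaw m0 α m t u' * pi0 P0 ⟨t, h⟩ u' (α ⟨t, h⟩ u') (m ⟨t, h⟩ u') u
      else 0

/-- The conditioning mapping `Γ((μ̃,m̃),α,m)`: all pairs `(μ',m')` disintegrating
`(μ̃,m̃)` over the major marginal law `p_t(·;α,m)`. -/
def GammaMap (m0 : ProbabilityMeasure (S × W))
    (α : Fin T → W → ProbabilityMeasure A) (m : Fin T → W → SubProb S)
    (p : (Fin (T + 1) → SubProb (S × W)) × (Fin T → SubProb (S × W))) :
    Set ((Fin (T + 1) → W → SubProb S) × (Fin T → W → SubProb S)) :=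
  {μm | (∀ (t : Fin (T + 1)) (u : W) (B : Set S), MeasurableSet B →
          ((p.1 t).1 : Measure (S × W)) (B ×ˢ ({u} : Set W)) =
            ENNReal.ofReal (majLaw P0 m0 α m (t : ℕ) u) * ((μm.1 t u).1 : Measure S) B)
      ∧ (∀ (t : Fin T) (u : W) (B : Set S), MeasurableSet B →
          ((p.2 t).1 : Measure (S × W)) (B ×ˢ ({u} : Set W)) =
            ENNReal.ofReal (majLaw P0 m0 α m (t : ℕ) u) * ((μm.2 t u).1 : Measure S) B)}

end Framework

section AuxLemmas

open BoundedContinuousFunction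
open scoped Classical
set_option linter.unusedSectionVars false

variable {S W A : Type*}
variable [MetricSpace S] [CompactSpace S] [Nonempty S]
  [MeasurableSpace S] [BorelSpace S] [SecondCountableTopology S]
variable [Fintype W] [Nonempty W] [TopologicalSpace W] [DiscreteTopology W]
  [MeasurableSpace W] [BorelSpace W]
variable [MetricSpace A] [CompactSpace A] [Nonempty A] [MeasurableSpace A] [BorelSpace A]
variable {T : ℕ}
variable (P0 : Fin T → W → A → SubProb S → ProbabilityMeasure W)

/-- Evaluation of a probability measure on the (clopen) singleton `{u'}` of a finite
discrete space is continuous for the weak topology. -/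
lemma aux_cont_eval (u' : W) :
    Continuous fun ν : ProbabilityMeasure W => ((ν : Measure W) {u'}).toReal := by
  have hf : Continuous fun w : W => (if w = u' then (1 : ℝ) else 0) :=
    continuous_of_discreteTopology
  set f : W →ᵇ ℝ := mkOfCompact ⟨_, hf⟩ with hfdef
  have key : ∀ ν : ProbabilityMeasure W,
      ((ν : Measure W) {u'}).toReal = ∫ w, f w ∂(ν : Measure W) := by
    intro ν
    have hpt : ∀ w, f w = Set.indicator ({u'} : Set W) (fun _ => (1 : ℝ)) w := by
      intro w
      simp [hfdef, Set.indicator_apply]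
    rw [integral_congr_ae (Filter.Eventually.of_forall hpt),
      integral_indicator_const (1 : ℝ) (measurableSet_singleton u')]
    simp
    rfl
  simp only [key]
  exact (FiniteMeasure.continuous_integral_boundedContinuousFunction f).comp
    ProbabilityMeasure.toFiniteMeasure_continuous

/-- Convergence of integrals of a jointly continuous function against weakly converging
probability measures on a compact space, with a converging parameter. -/
lemma aux_tendsto_integral_param {M : Type*} [TopologicalSpace M]
    (f : C(A × M, ℝ)) {αn : ℕ → ProbabilityMeasure A} {α : ProbabilityMeasure A}
    {mn : ℕ → M} {m : M}
    (hα : Tendsto αn atTop (𝓝 α)) (hm : Tendsto mn atTop (𝓝 m)) :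
    Tendsto (fun n => ∫ a, f (a, mn n) ∂(αn n : Measure A)) atTop
      (𝓝 (∫ a, f (a, m) ∂(α : Measure A))) := by
  set F : C(M, C(A, ℝ)) := ContinuousMap.curry (f.comp ⟨Prod.swap, continuous_swap⟩) with hF
  have hFapp : ∀ (m' : M) (a : A), F m' a = f (a, m') := fun _ _ => rfl
  have hdist : Tendsto (fun n => dist (F (mn n)) (F m)) atTop (𝓝 0) :=
    tendsto_iff_dist_tendsto_zero.mp ((F.continuous.tendsto m).comp hm)
  set g : A →ᵇ ℝ := mkOfCompact (F m) with hg
  have h2 : Tendsto (fun n => ∫ a, g a ∂(αn n : Measure A)) atTop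
      (𝓝 (∫ a, g a ∂(α : Measure A))) :=
    ProbabilityMeasure.tendsto_iff_forall_integral_tendsto.mp hα g
  have h1 : Tendsto (fun n =>
      (∫ a, f (a, mn n) ∂(αn n : Measure A)) - ∫ a, g a ∂(αn n : Measure A)) atTop (𝓝 0) := by
    refine squeeze_zero_norm (fun n => ?_) hdist
    set gn : A →ᵇ ℝ := mkOfCompact (F (mn n)) with hgn
    have heq : (∫ a, f (a, mn n) ∂(αn n : Measure A)) - ∫ a, g a ∂(αn n : Measure A)
        = ∫ a, (gn a - g a) ∂(αn n : Measure A) := by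
      rw [integral_sub (gn.integrable (μ := (αn n : Measure A))) (g.integrable (μ := (αn n : Measure A)))]
      rfl
    rw [heq]
    have hb : ∀ a, ‖gn a - g a‖ ≤ dist (F (mn n)) (F m) := by
      intro a
      rw [← dist_eq_norm, ← dist_mkOfCompact]
      exact BoundedContinuousFunction.dist_coe_le_dist a
    calc ‖∫ a, (gn a - g a) ∂(αn n : Measure A)‖
        ≤ dist (F (mn n)) (F m) * ((αn n : Measure A) Set.univ).toReal :=
          norm_integral_le_of_norm_le_const (Filter.Eventually.of_forall hb)
      _ = dist (F (mn n)) (F m) := by simp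
  have h3 := h1.add h2
  rw [zero_add] at h3
  have hfun : (fun n => ((∫ a, f (a, mn n) ∂(αn n : Measure A)) - ∫ a, g a ∂(αn n : Measure A))
      + ∫ a, g a ∂(αn n : Measure A)) = fun n => ∫ a, f (a, mn n) ∂(αn n : Measure A) := by
    funext n; ring
  rw [hfun] at h3
  exact h3

lemma aux_pi0_nonneg (t : Fin T) (u : W) (α : ProbabilityMeasure A) (m : SubProb S) (u' : W) :
    0 ≤ pi0 P0 t u α m u' :=
  integral_nonneg fun _ => ENNReal.toReal_nonneg

lemma aux_pi0_tendsto (t : Fin T) (u u' : W)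
    (hP0 : Continuous fun z : A × SubProb S => P0 t u z.1 z.2)
    {αn : ℕ → ProbabilityMeasure A} {α : ProbabilityMeasure A}
    {mn : ℕ → SubProb S} {m : SubProb S}
    (hαn : Tendsto αn atTop (𝓝 α)) (hmn : Tendsto mn atTop (𝓝 m)) :
    Tendsto (fun n => pi0 P0 t u (αn n) (mn n) u') atTop (𝓝 (pi0 P0 t u α m u')) := by
  have hc : Continuous fun z : A × SubProb S => (((P0 t u z.1 z.2 : Measure W)) {u'}).toReal :=
    (aux_cont_eval u').comp hP0
  exact aux_tendsto_integral_param ⟨_, hc⟩ hαn hmn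

lemma aux_majLaw_nonneg (m0 : ProbabilityMeasure (S × W))
    (α : Fin T → W → ProbabilityMeasure A) (m : Fin T → W → SubProb S) (t : ℕ) (u : W) :
    0 ≤ majLaw P0 m0 α m t u := by
  induction t generalizing u with
  | zero => exact ENNReal.toReal_nonneg
  | succ t ih =>
    rw [majLaw]
    split
    · exact Finset.sum_nonneg fun u' _ => mul_nonneg (ih u') (aux_pi0_nonneg P0 _ _ _ _ _)
    · exact le_refl 0

lemma aux_majLaw_tendsto
    (hP0 : ∀ (t : Fin T) (u : W), Continuous fun z : A × SubProb S => P0 t u z.1 z.2)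
    (m0 : ProbabilityMeasure (S × W))
    {αn : ℕ → Fin T → W → ProbabilityMeasure A} {α : Fin T → W → ProbabilityMeasure A}
    {mn : ℕ → Fin T → W → SubProb S} {m : Fin T → W → SubProb S}
    (hα : Tendsto αn atTop (𝓝 α)) (hm : Tendsto mn atTop (𝓝 m)) (t : ℕ) (u : W) :
    Tendsto (fun n => majLaw P0 m0 (αn n) (mn n) t u) atTop (𝓝 (majLaw P0 m0 α m t u)) := by
  induction t generalizing u with
  | zero =>
    simp only [majLaw]
    exact tendsto_const_nhds
  | succ t ih =>
    by_cases h : t < T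
    · simp only [majLaw, dif_pos h]
      apply tendsto_finset_sum
      intro u' _
      have hαc : Tendsto (fun n => αn n ⟨t, h⟩ u') atTop (𝓝 (α ⟨t, h⟩ u')) :=
        tendsto_pi_nhds.mp (tendsto_pi_nhds.mp hα ⟨t, h⟩) u'
      have hmc : Tendsto (fun n => mn n ⟨t, h⟩ u') atTop (𝓝 (m ⟨t, h⟩ u')) :=
        tendsto_pi_nhds.mp (tendsto_pi_nhds.mp hm ⟨t, h⟩) u'
      exact (ih u').mul (aux_pi0_tendsto P0 ⟨t, h⟩ u' u (hP0 ⟨t, h⟩ u') hαc hmc)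
    · simp only [majLaw, dif_neg h]
      exact tendsto_const_nhds

lemma aux_slice_apply (η : Measure (S × W)) (u : W) {B : Set S} (hB : MeasurableSet B) :
    Measure.map Prod.fst (η.restrict (Set.univ ×ˢ ({u} : Set W))) B
      = η (B ×ˢ ({u} : Set W)) := by
  rw [Measure.map_apply measurable_fst hB, Measure.restrict_apply (measurable_fst hB)]
  congr 1
  ext z
  simp only [Set.mem_inter_iff, Set.mem_preimage, Set.mem_prod, Set.mem_univ, true_and,
    Set.mem_singleton_iff]

/-- The bounded continuous function `z ↦ φ(z.1) ⬝ 1_{z.2 = u}` on `S × W`. -/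
noncomputable def auxPsi (u : W) (φ : S →ᵇ ℝ≥0) : (S × W) →ᵇ ℝ≥0 :=
  mkOfCompact ⟨fun z => (fun w : W => if w = u then (1 : ℝ≥0) else 0) z.2 * φ z.1,
    ((continuous_of_discreteTopology
      (f := fun w : W => if w = u then (1 : ℝ≥0) else 0)).comp continuous_snd).mul
      (φ.continuous.comp continuous_fst)⟩

lemma aux_lintegral_slice (η : Measure (S × W)) (u : W) (φ : S →ᵇ ℝ≥0) :
    ∫⁻ x, φ x ∂(Measure.map Prod.fst (η.restrict (Set.univ ×ˢ ({u} : Set W))))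
      = ∫⁻ z : S × W, auxPsi u φ z ∂η := by
  have hmeas : Measurable fun x : S => (φ x : ℝ≥0∞) :=
    φ.continuous.measurable.coe_nnreal_ennreal
  rw [lintegral_map hmeas measurable_fst, ← lintegral_indicator
    (MeasurableSet.univ.prod (measurableSet_singleton u))]
  apply lintegral_congr
  intro z
  rw [Set.indicator_apply]
  by_cases hz : z.2 = u
  · have hmem : z ∈ Set.univ ×ˢ ({u} : Set W) := ⟨trivial, hz⟩
    rw [if_pos hmem]
    simp [auxPsi, hz]
  · have hmem : z ∉ Set.univ ×ˢ ({u} : Set W) := fun hh => hz hh.2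
    rw [if_neg hmem]
    simp [auxPsi, hz]

/-- The key closure lemma: a disintegration identity of the form
`νₙ(B × {u}) = cₙ · ρₙ(B)` is preserved under weak limits. -/
lemma aux_limit_disintegration (u : W)
    {νn : ℕ → FiniteMeasure (S × W)} {ν : FiniteMeasure (S × W)}
    {ρn : ℕ → FiniteMeasure S} {ρ : FiniteMeasure S}
    {cn : ℕ → ℝ} {c : ℝ}
    (hν : Tendsto νn atTop (𝓝 ν)) (hρ : Tendsto ρn atTop (𝓝 ρ))
    (hc : Tendsto cn atTop (𝓝 c))
    (h : ∀ n (B : Set S), MeasurableSet B →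
      (νn n : Measure (S × W)) (B ×ˢ ({u} : Set W))
        = ENNReal.ofReal (cn n) * (ρn n : Measure S) B) :
    ∀ B : Set S, MeasurableSet B →
      (ν : Measure (S × W)) (B ×ˢ ({u} : Set W)) = ENNReal.ofReal c * (ρ : Measure S) B := by
  set σ : Measure S :=
    Measure.map Prod.fst ((ν : Measure (S × W)).restrict (Set.univ ×ˢ ({u} : Set W))) with hσ
  have hσfin : IsFiniteMeasure σ := by
    constructor
    rw [hσ, aux_slice_apply _ _ MeasurableSet.univ]
    exact lt_of_le_of_lt (measure_mono (Set.subset_univ _)) (measure_lt_top _ _)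
  have hcfin : IsFiniteMeasure (ENNReal.ofReal c • (ρ : Measure S)) :=
    Measure.smul_finite _ ENNReal.ofReal_ne_top
  have key : σ = ENNReal.ofReal c • (ρ : Measure S) := by
    apply ext_of_forall_lintegral_eq_of_IsFiniteMeasure
    intro φ
    have eqn : ∀ n, ∫⁻ z : S × W, auxPsi u φ z ∂(νn n : Measure (S × W))
        = ENNReal.ofReal (cn n) * ∫⁻ x, φ x ∂(ρn n : Measure S) := by
      intro n
      rw [← aux_lintegral_slice]
      have hmap : Measure.map Prod.fst
          ((νn n : Measure (S × W)).restrict (Set.univ ×ˢ ({u} : Set W)))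
          = ENNReal.ofReal (cn n) • (ρn n : Measure S) := by
        apply Measure.ext
        intro B hB
        rw [aux_slice_apply _ _ hB, h n B hB]
        simp
      rw [hmap, lintegral_smul_measure, smul_eq_mul]
    have hLHS : Tendsto (fun n => ∫⁻ z : S × W, auxPsi u φ z ∂(νn n : Measure (S × W)))
        atTop (𝓝 (∫⁻ z : S × W, auxPsi u φ z ∂(ν : Measure (S × W)))) :=
      FiniteMeasure.tendsto_iff_forall_lintegral_tendsto.mp hν (auxPsi u φ)
    have hRHS : Tendsto (fun n => ENNReal.ofReal (cn n) * ∫⁻ x, φ x ∂(ρn n : Measure S))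
        atTop (𝓝 (ENNReal.ofReal c * ∫⁻ x, φ x ∂(ρ : Measure S))) := by
      refine ENNReal.Tendsto.mul ((ENNReal.continuous_ofReal.tendsto c).comp hc)
        (Or.inr (φ.lintegral_lt_top_of_nnreal (ρ : Measure S)).ne)
        (FiniteMeasure.tendsto_iff_forall_lintegral_tendsto.mp hρ φ)
        (Or.inr ENNReal.ofReal_ne_top)
    have huniq : ∫⁻ z : S × W, auxPsi u φ z ∂(ν : Measure (S × W))
        = ENNReal.ofReal c * ∫⁻ x, φ x ∂(ρ : Measure S) := by
      apply tendsto_nhds_unique hLHS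
      simpa only [eqn] using hRHS
    rw [hσ, aux_lintegral_slice, lintegral_smul_measure, huniq, smul_eq_mul]
  intro B hB
  rw [← aux_slice_apply (ν : Measure (S × W)) u hB, ← hσ, key]
  simp

end AuxLemmas

/-- Under Assumption A1, the conditioning mapping
`Γ : 𝒱 × 𝒜 × C_m → 2^{C_μ × C_m}` has a closed graph: if `(μ̃ⁿ,m̃ⁿ) → (μ̃,m̃)` in `𝒱`,
`αⁿ → α` in `𝒜`, `mⁿ → m` in `C_m` (all in the product topologies of weak convergence),
and `(μ'ⁿ,m'ⁿ) ∈ Γ((μ̃ⁿ,m̃ⁿ),αⁿ,mⁿ)` converges to `(μ',m')` in `C_μ × C_m`, then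
`(μ',m') ∈ Γ((μ̃,m̃),α,m)`. -/
theorem gammaMap_closedGraph
    {S W A : Type*}
    [MetricSpace S] [CompactSpace S] [Nonempty S]
    [MeasurableSpace S] [BorelSpace S] [SecondCountableTopology S]
    [Fintype W] [Nonempty W] [TopologicalSpace W] [DiscreteTopology W]
    [MeasurableSpace W] [BorelSpace W]
    [MetricSpace A] [CompactSpace A] [Nonempty A] [MeasurableSpace A] [BorelSpace A]
    {T : ℕ}
    (P0 : Fin T → W → A → SubProb S → ProbabilityMeasure W)
    (P1 : Fin T → S → W → SubProb S → ProbabilityMeasure S)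
    (hP0 : ∀ (t : Fin T) (u : W),
      Continuous fun z : A × SubProb S => P0 t u z.1 z.2)
    (hP1 : ∀ (t : Fin T) (u : W),
      Continuous fun z : S × SubProb S => P1 t z.1 u z.2)
    (m0 : ProbabilityMeasure (S × W))
    -- the sequences of occupation measures, controls and mean-field flows
    (pseq : ℕ → (Fin (T + 1) → SubProb (S × W)) × (Fin T → SubProb (S × W)))
    (p : (Fin (T + 1) → SubProb (S × W)) × (Fin T → SubProb (S × W)))
    (αseq : ℕ → Fin T → W → ProbabilityMeasure A) (α : Fin T → W → ProbabilityMeasure A)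
    (mseq : ℕ → Fin T → W → SubProb S) (m : Fin T → W → SubProb S)
    (μ'seq : ℕ → Fin (T + 1) → W → SubProb S) (μ' : Fin (T + 1) → W → SubProb S)
    (m'seq : ℕ → Fin T → W → SubProb S) (m' : Fin T → W → SubProb S)
    (hp : Tendsto pseq atTop (𝓝 p))
    (hα : Tendsto αseq atTop (𝓝 α))
    (hm : Tendsto mseq atTop (𝓝 m))
    (hmem : ∀ n, ((μ'seq n, m'seq n) :
        (Fin (T + 1) → W → SubProb S) × (Fin T → W → SubProb S)) ∈
      GammaMap P0 m0 (αseq n) (mseq n) (pseq n))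
    (hμ' : Tendsto μ'seq atTop (𝓝 μ'))
    (hm' : Tendsto m'seq atTop (𝓝 m')) :
    ((μ', m') : (Fin (T + 1) → W → SubProb S) × (Fin T → W → SubProb S)) ∈
      GammaMap P0 m0 α m p := by
  have hcn : ∀ (t : ℕ) (u : W),
      Tendsto (fun n => majLaw P0 m0 (αseq n) (mseq n) t u) atTop
        (𝓝 (majLaw P0 m0 α m t u)) :=
    fun t u => aux_majLaw_tendsto P0 hP0 m0 hα hm t u
  constructor
  · intro t u B hB
    have h0 : Tendsto (fun n => (pseq n).1 t) atTop (𝓝 (p.1 t)) :=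
      tendsto_pi_nhds.mp ((continuous_fst.tendsto p).comp hp) t
    have hν : Tendsto (fun n => ((pseq n).1 t).1) atTop (𝓝 ((p.1 t).1)) :=
      (continuous_subtype_val.tendsto _).comp h0
    have h0' : Tendsto (fun n => μ'seq n t u) atTop (𝓝 (μ' t u)) :=
      tendsto_pi_nhds.mp (tendsto_pi_nhds.mp hμ' t) u
    have hρ : Tendsto (fun n => (μ'seq n t u).1) atTop (𝓝 ((μ' t u).1)) :=
      (continuous_subtype_val.tendsto _).comp h0'
    exact aux_limit_disintegration u hν hρ (hcn t u)
      (fun n B' hB' => (hmem n).1 t u B' hB') B hB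
  · intro t u B hB
    have h0 : Tendsto (fun n => (pseq n).2 t) atTop (𝓝 (p.2 t)) :=
      tendsto_pi_nhds.mp ((continuous_snd.tendsto p).comp hp) t
    have hν : Tendsto (fun n => ((pseq n).2 t).1) atTop (𝓝 ((p.2 t).1)) :=
      (continuous_subtype_val.tendsto _).comp h0
    have h0' : Tendsto (fun n => m'seq n t u) atTop (𝓝 (m' t u)) :=
      tendsto_pi_nhds.mp (tendsto_pi_nhds.mp hm' t) u
    have hρ : Tendsto (fun n => (m'seq n t u).1) atTop (𝓝 ((m' t u).1)) :=
      (continuous_subtype_val.tendsto _).comp h0'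
    exact aux_limit_disintegration u hν hρ (hcn t u)
      (fun n B' hB' => (hmem n).2 t u B' hB') B hB
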